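/- Let K be a Galois number field of degree k and let a_K(n) denote the number of integral ideals of O_K of absolute norm n. Then for every positive integer n = ∏_j p_j^{α_j}, where p_j decomposes in O_K into r_j primes of residue degree f_j, one has a_K(n) ≤ a_K(n*) = ∏_j τ_{r_j}(p_j^{⌈α_j/f_j⌉}) ≤ τ_k(n). -/

import Mathlib

open NumberField

open scoped Classical

set_option maxHeartbeats 1000000
set_option synthInstance.maxHeartbeats 400000

noncomputable section

/-- τ_m(n): number of m-tuples of positive integers with product n. -/
def tauk (k n : ℕ) : ℕ := Nat.card {t : Fin k → ℕ // (∀ i, 0 < t i) ∧ ∏ i, t i = n}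

/-- n* = ∏ p^{f_p ⌈α_p/f_p⌉}, where fd gives the residue degrees. -/
def nStar (fd : ℕ → ℕ) (n : ℕ) : ℕ :=
  ∏ p ∈ n.primeFactors, p ^ (fd p * ((n.factorization p + fd p - 1) / fd p))

/-- a_K(n): number of integral ideals of norm n. -/
def aK (K : Type) [Field K] [NumberField K] (n : ℕ) : ℕ :=
  Nat.card {𝔞 : Ideal (𝓞 K) // Ideal.absNorm 𝔞 = n}

/-- The number of distinct prime ideals of 𝓞 K lying above p. -/
def rdeg (K : Type) [Field K] [NumberField K] (p : ℕ) : ℕ :=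
  Nat.card {P : Ideal (𝓞 K) // P.IsMaximal ∧ (p : 𝓞 K) ∈ P}

/-! ### Auxiliary combinatorial lemmas -/

open UniqueFactorizationMonoid

section NatPart

lemma finite_sumTuple (m β : ℕ) : Finite {e : Fin m → ℕ // ∑ i, e i = β} := by
  have hbd : ∀ (e : {e : Fin m → ℕ // ∑ i, e i = β}) (i : Fin m), e.1 i < β + 1 := fun e i =>
    Nat.lt_succ_of_le (le_of_le_of_eq (Finset.single_le_sum
      (fun j _ => Nat.zero_le (e.1 j)) (Finset.mem_univ i)) e.2)
  refine Finite.of_injective (fun e => fun i => (⟨e.1 i, hbd e i⟩ : Fin (β + 1))) ?_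
  intro e e' h
  apply Subtype.ext; funext i
  exact congrArg Fin.val (congrFun h i)

lemma prod_primes_pow_factorization_inj {ι : Type*} [DecidableEq ι] (s : Finset ι) (π : ι → ℕ)
    (hπ : ∀ i ∈ s, (π i).Prime) (hinj : ∀ i ∈ s, ∀ j ∈ s, π i = π j → i = j) (m : ι → ℕ)
    {q : ι} (hq : q ∈ s) :
    (∏ i ∈ s, π i ^ m i).factorization (π q) = m q := by
  rw [Nat.factorization_prod (fun i hi => pow_ne_zero _ (hπ i hi).pos.ne'),
    Finsupp.finset_sum_apply]
  have h1 : ∀ i ∈ s, ((π i ^ m i).factorization) (π q) = if i = q then m i else 0 := fun i hi => by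
    rw [(hπ i hi).factorization_pow, Finsupp.single_apply]
    exact if_congr ⟨fun h => hinj i hi q hq h, fun h => h ▸ rfl⟩ rfl rfl
  rw [Finset.sum_congr rfl h1, Finset.sum_ite_eq' s q m, if_pos hq]

lemma prod_primes_pow_factorization {s : Finset ℕ} (hs : ∀ p ∈ s, p.Prime) (m : ℕ → ℕ)
    {q : ℕ} (hq : q ∈ s) :
    (∏ p ∈ s, p ^ m p).factorization q = m q := by
  classical
  exact prod_primes_pow_factorization_inj s id hs (fun i _ j _ h => h) m hq

lemma prime_dvd_prod_pow {s : Finset ℕ} (hs : ∀ p ∈ s, p.Prime) (m : ℕ → ℕ)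
    {q : ℕ} (hq : q.Prime) (hdvd : q ∣ ∏ p ∈ s, p ^ m p) : q ∈ s := by
  obtain ⟨p, hp, hqd⟩ := (Prime.dvd_finset_prod_iff hq.prime _).1 hdvd
  have := (Nat.prime_dvd_prime_iff_eq hq (hs p hp)).1 (hq.dvd_of_dvd_pow hqd)
  exact this ▸ hp

lemma tauk_prime_pow {p : ℕ} (hp : p.Prime) (m β : ℕ) :
    tauk m (p ^ β) = Nat.card {e : Fin m → ℕ // ∑ i, e i = β} := by
  refine Nat.card_congr ⟨fun t => ⟨fun i => (t.1 i).factorization p, ?_⟩,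
    fun e => ⟨fun i => p ^ e.1 i, fun i => pow_pos hp.pos _, ?_⟩, ?_, ?_⟩
  · have h1 : (∏ i, t.1 i).factorization p = ∑ i, (t.1 i).factorization p := by
      rw [Nat.factorization_prod (fun i _ => (t.2.1 i).ne')]
      exact Finsupp.finset_sum_apply _ _ _
    rw [← h1, t.2.2, hp.factorization_pow, Finsupp.single_eq_same]
  · rw [Finset.prod_pow_eq_pow_sum, e.2]
  · intro t
    apply Subtype.ext; funext i
    have htd : t.1 i ∣ p ^ β :=
      (Finset.dvd_prod_of_mem t.1 (Finset.mem_univ i)).trans (dvd_of_eq t.2.2)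
    obtain ⟨c, _, hce⟩ := (Nat.dvd_prime_pow hp).1 htd
    simp only [hce, hp.factorization_pow, Finsupp.single_eq_same]
  · intro e
    apply Subtype.ext; funext i
    show (p ^ e.1 i).factorization p = e.1 i
    rw [hp.factorization_pow, Finsupp.single_eq_same]

lemma card_sumTuple_mono {r k β α : ℕ} (hrk : r ≤ k) (hβα : β ≤ α) (hk : 0 < k) :
    Nat.card {e : Fin r → ℕ // ∑ i, e i = β} ≤ Nat.card {e : Fin k → ℕ // ∑ i, e i = α} := by
  haveI := finite_sumTuple k α
  set z : Fin k := ⟨0, hk⟩ with hz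
  refine Nat.card_le_card_of_injective (fun e =>
    ⟨fun j => (if h : (j : ℕ) < r then e.1 ⟨j, h⟩ else 0) + (if j = z then α - β else 0), ?_⟩) ?_
  · rw [Finset.sum_add_distrib]
    have h1 : ∑ j : Fin k, (if h : (j : ℕ) < r then e.1 ⟨j, h⟩ else 0) = β := by
      calc ∑ j : Fin k, (if h : (j : ℕ) < r then e.1 ⟨j, h⟩ else 0)
          = ∑ j ∈ Finset.range k, (if h : j < r then e.1 ⟨j, h⟩ else 0) :=
            Fin.sum_univ_eq_sum_range (fun j => if h : j < r then e.1 ⟨j, h⟩ else 0) k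
        _ = ∑ j ∈ Finset.range r, (if h : j < r then e.1 ⟨j, h⟩ else 0) :=
            (Finset.sum_subset (Finset.range_subset_range.2 hrk)
              (fun j _ hj => dif_neg (by simpa using hj))).symm
        _ = ∑ j : Fin r, (if h : ((j : Fin r) : ℕ) < r then e.1 ⟨j, h⟩ else 0) :=
            (Fin.sum_univ_eq_sum_range (fun j => if h : j < r then e.1 ⟨j, h⟩ else 0) r).symm
        _ = ∑ j : Fin r, e.1 j := Finset.sum_congr rfl fun i _ => by rw [dif_pos i.2]
        _ = β := e.2
    have h2 : ∑ j : Fin k, (if j = z then α - β else 0) = α - β := by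
      rw [Finset.sum_ite_eq' Finset.univ z (fun _ => α - β), if_pos (Finset.mem_univ z)]
    rw [h1, h2, Nat.add_sub_cancel' hβα]
  · intro e e' h
    have hval := congrArg Subtype.val h
    apply Subtype.ext; funext i
    have hi := congrFun hval (Fin.castLE hrk i)
    have hlt : ((Fin.castLE hrk i : Fin k) : ℕ) < r := i.2
    dsimp only at hi
    rw [dif_pos hlt, dif_pos hlt] at hi
    simpa using Nat.add_right_cancel hi

lemma tauk_eq_prod (k n : ℕ) (hn : n ≠ 0) :
    tauk k n = ∏ p ∈ n.primeFactors,
      Nat.card {e : Fin k → ℕ // ∑ i, e i = n.factorization p} := by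
  classical
  have hprime : ∀ p ∈ n.primeFactors, p.Prime := fun p hp => Nat.prime_of_mem_primeFactors hp
  have hE : {t : Fin k → ℕ // (∀ i, 0 < t i) ∧ ∏ i, t i = n} ≃
      ∀ p : n.primeFactors, {e : Fin k → ℕ // ∑ i, e i = n.factorization (p : ℕ)} := by
    refine ⟨fun t p => ⟨fun i => (t.1 i).factorization p, ?_⟩,
      fun g => ⟨fun i => ∏ p ∈ n.primeFactors.attach, (p : ℕ) ^ (g p).1 i, ?_, ?_⟩, ?_, ?_⟩
    · have h1 : (∏ i, t.1 i).factorization (p : ℕ) = ∑ i, (t.1 i).factorization (p : ℕ) := by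
        rw [Nat.factorization_prod (fun i _ => (t.2.1 i).ne')]
        exact Finsupp.finset_sum_apply _ _ _
      rw [← h1, t.2.2]
    · intro i
      exact Finset.prod_pos fun p _ => pow_pos (hprime p p.2).pos _
    · rw [Finset.prod_comm]
      have h2 : ∀ p ∈ n.primeFactors.attach,
          ∏ i, ((p : ℕ) ^ (g p).1 i) = (p : ℕ) ^ n.factorization (p : ℕ) := fun p _ => by
        rw [Finset.prod_pow_eq_pow_sum, (g p).2]
      rw [Finset.prod_congr rfl h2,
        Finset.prod_attach n.primeFactors (fun p => p ^ n.factorization p),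
        ← Nat.support_factorization]
      exact Nat.factorization_prod_pow_eq_self hn
    · intro t
      apply Subtype.ext; funext i
      have hti : t.1 i ≠ 0 := (t.2.1 i).ne'
      have htd : t.1 i ∣ n :=
        (Finset.dvd_prod_of_mem t.1 (Finset.mem_univ i)).trans (dvd_of_eq t.2.2)
      show ∏ p ∈ n.primeFactors.attach, (p : ℕ) ^ (t.1 i).factorization (p : ℕ) = t.1 i
      rw [Finset.prod_attach n.primeFactors (fun p => p ^ (t.1 i).factorization p)]
      have hsub := Nat.primeFactors_mono htd hn
      rw [← Finset.prod_subset hsub (fun p _ hp => by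
        rw [Finsupp.notMem_support_iff.1 (by rwa [Nat.support_factorization]), pow_zero]),
        ← Nat.support_factorization]
      exact Nat.factorization_prod_pow_eq_self hti
    · intro g
      funext p
      apply Subtype.ext; funext i
      show (∏ q ∈ n.primeFactors.attach, (q : ℕ) ^ (g q).1 i).factorization (p : ℕ) = (g p).1 i
      exact prod_primes_pow_factorization_inj n.primeFactors.attach (fun q => (q : ℕ))
        (fun q _ => hprime q q.2) (fun q _ q' _ h => Subtype.ext h) (fun q => (g q).1 i)
        (Finset.mem_attach _ p)
  rw [tauk, Nat.card_congr hE, Nat.card_pi, ← Finset.prod_coe_sort n.primeFactors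
    (fun p => Nat.card {e : Fin k → ℕ // ∑ i, e i = n.factorization p})]

end NatPart

/-! ### Ideal-theoretic lemmas -/

section IdealPart

variable {K : Type} [Field K] [NumberField K]

lemma finite_normEq (m : ℕ) : Finite {𝔞 : Ideal (𝓞 K) // Ideal.absNorm 𝔞 = m} :=
  (Ideal.finite_setOf_absNorm_eq m).to_subtype

lemma exists_natPrime_mem {P : Ideal (𝓞 K)} (hP : P.IsPrime) (hPt : P ≠ ⊤) :
    ∀ m : ℕ, m ≠ 0 → (m : 𝓞 K) ∈ P → ∃ q : ℕ, q.Prime ∧ q ∣ m ∧ (q : 𝓞 K) ∈ P := by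
  intro m
  induction m using Nat.strong_induction_on with
  | _ m ih =>
    intro hm0 hmem
    rcases eq_or_ne m 1 with rfl | hm1
    · exact absurd (by simpa using hmem) ((Ideal.ne_top_iff_one P).1 hPt)
    · have hp := Nat.minFac_prime hm1
      obtain ⟨c, hc⟩ := Nat.minFac_dvd m
      have hmul : ((m.minFac : 𝓞 K) * (c : 𝓞 K)) ∈ P := by
        rw [← Nat.cast_mul, ← hc]; exact hmem
      rcases hP.mem_or_mem hmul with h | h
      · exact ⟨m.minFac, hp, Nat.minFac_dvd m, h⟩
      · have hc0 : c ≠ 0 := by rintro rfl; rw [mul_zero] at hc; exact hm0 hc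
        have hclt : c < m := by
          have h2 := hp.two_le
          have h1c : 1 ≤ c := Nat.one_le_iff_ne_zero.2 hc0
          calc c < 2 * c := by omega
            _ ≤ m.minFac * c := Nat.mul_le_mul_right c h2
            _ = m := hc.symm
        obtain ⟨q, hq, hqd, hqm⟩ := ih c hclt hc0 h
        have hcm : c ∣ m := ⟨m.minFac, by rw [Nat.mul_comm c m.minFac]; exact hc⟩
        exact ⟨q, hq, hqd.trans hcm, hqm⟩

lemma prime_ideal_data {P : Ideal (𝓞 K)} (hP : Prime P) :
    ∃ q : ℕ, q.Prime ∧ (q : 𝓞 K) ∈ P ∧ P.IsMaximal ∧ P ≠ ⊥ := by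
  have hbot : P ≠ ⊥ := by rw [← Ideal.zero_eq_bot]; exact hP.ne_zero
  have hpr : P.IsPrime := Ideal.isPrime_of_prime hP
  have hmax : P.IsMaximal := hpr.isMaximal hbot
  have h0 : Ideal.absNorm P ≠ 0 := by
    rw [Ne, Ideal.absNorm_eq_zero_iff]; exact hbot
  obtain ⟨q, hq, _, hmem⟩ :=
    exists_natPrime_mem hpr hmax.ne_top (Ideal.absNorm P) h0 (Ideal.absNorm_mem P)
  exact ⟨q, hq, hmem, hmax, hbot⟩

lemma not_mem_of_mem_distinct {p q : ℕ} (hp : p.Prime) (hq : q.Prime) (hne : p ≠ q)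
    {P : Ideal (𝓞 K)} (hPt : P ≠ ⊤) (hpP : (p : 𝓞 K) ∈ P) : (q : 𝓞 K) ∉ P := by
  intro hqP
  have hcop : IsCoprime (p : ℤ) (q : ℤ) := by
    rw [Int.isCoprime_iff_gcd_eq_one]
    exact_mod_cast (Nat.coprime_primes hp hq).2 hne
  obtain ⟨a, b, hab⟩ := hcop
  apply hPt
  rw [Ideal.eq_top_iff_one]
  have hmem : ((a * p + b * q : ℤ) : 𝓞 K) ∈ P := by
    push_cast
    exact P.add_mem (P.mul_mem_left _ hpP) (P.mul_mem_left _ hqP)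
  rw [hab] at hmem
  simpa using hmem

/-- count of prime ideals above `p` in a multiset, with multiplicity. -/
def cntM (p : ℕ) (s : Multiset (Ideal (𝓞 K))) : ℕ :=
  Multiset.countP (fun P => P.IsMaximal ∧ (p : 𝓞 K) ∈ P) s

lemma cntM_add (p : ℕ) (s t : Multiset (Ideal (𝓞 K))) :
    cntM p (s + t) = cntM p s + cntM p t := by
  unfold cntM; rw [Multiset.countP_add]

lemma sum_count_eq_cntM {p : ℕ} [Fintype {P : Ideal (𝓞 K) // P.IsMaximal ∧ (p : 𝓞 K) ∈ P}]
    (s : Multiset (Ideal (𝓞 K))) :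
    ∑ P : {P : Ideal (𝓞 K) // P.IsMaximal ∧ (p : 𝓞 K) ∈ P}, s.count P.1 = cntM p s := by
  induction s using Multiset.induction_on with
  | empty => simp [cntM]
  | cons a s ih =>
    have hcnt : cntM p (a ::ₘ s) = cntM p s + if a.IsMaximal ∧ (p : 𝓞 K) ∈ a then 1 else 0 := by
      unfold cntM
      rw [Multiset.countP_cons]
    rw [hcnt]
    simp only [Multiset.count_cons]
    rw [Finset.sum_add_distrib, ih]
    congr 1
    by_cases ha : a.IsMaximal ∧ (p : 𝓞 K) ∈ a
    · rw [if_pos ha]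
      have hterm : ∀ P : {P : Ideal (𝓞 K) // P.IsMaximal ∧ (p : 𝓞 K) ∈ P},
          (if P.1 = a then (1 : ℕ) else 0)
            = (if P = (⟨a, ha⟩ : {P : Ideal (𝓞 K) // P.IsMaximal ∧ (p : 𝓞 K) ∈ P})
                then (1 : ℕ) else 0) :=
        fun P => if_congr ⟨fun h => Subtype.ext h, fun h => by rw [h]⟩ rfl rfl
      rw [Finset.sum_congr rfl (fun P _ => hterm P),
        Finset.sum_ite_eq' Finset.univ
          (⟨a, ha⟩ : {P : Ideal (𝓞 K) // P.IsMaximal ∧ (p : 𝓞 K) ∈ P}) (fun _ => (1 : ℕ)),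
        if_pos (Finset.mem_univ _)]
    · rw [if_neg ha]
      exact Finset.sum_eq_zero fun P _ => if_neg (fun h => ha (by rw [← h]; exact P.2))

lemma SP_prime {p : ℕ} (hp : p.Prime) {P : Ideal (𝓞 K)}
    (h : P.IsMaximal ∧ (p : 𝓞 K) ∈ P) : Prime P := by
  have hbot : P ≠ ⊥ := by
    intro hb
    rw [hb, Ideal.mem_bot] at h
    exact (Nat.cast_ne_zero (R := 𝓞 K)).2 hp.pos.ne' h.2
  exact (Ideal.prime_iff_isPrime hbot).2 h.1.isPrime

lemma key (fd : ℕ → ℕ)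
    (hfd : ∀ p : ℕ, p.Prime → ∀ P : Ideal (𝓞 K), P.IsMaximal → (p : 𝓞 K) ∈ P →
      Ideal.absNorm P = p ^ fd p)
    {p : ℕ} (hp : p.Prime) :
    ∀ 𝔞 : Ideal (𝓞 K), 𝔞 ≠ 0 →
      (Ideal.absNorm 𝔞).factorization p = fd p * cntM p (normalizedFactors 𝔞) := by
  refine fun 𝔞 => UniqueFactorizationMonoid.induction_on_prime 𝔞 ?_ ?_ ?_
  · intro h; exact absurd rfl h
  · intro 𝔟 h𝔟 _
    rw [Ideal.isUnit_iff] at h𝔟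
    subst h𝔟
    have : normalizedFactors (⊤ : Ideal (𝓞 K)) = 0 := by
      rw [← Ideal.one_eq_top]; exact normalizedFactors_one
    rw [this, Ideal.absNorm_top]
    simp [cntM]
  · intro 𝔟 P h𝔟 hP ih _
    obtain ⟨q, hq, hqP, hmax, hbot⟩ := prime_ideal_data hP
    have hP0 : P ≠ 0 := hP.ne_zero
    have hnP : Ideal.absNorm P = q ^ fd q := hfd q hq P hmax hqP
    have hNP : Ideal.absNorm P ≠ 0 := by
      rw [Ne, Ideal.absNorm_eq_zero_iff, ← Ideal.zero_eq_bot]; exact hP0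
    have hN𝔟 : Ideal.absNorm 𝔟 ≠ 0 := by
      rw [Ne, Ideal.absNorm_eq_zero_iff, ← Ideal.zero_eq_bot]; exact h𝔟
    have hnf : normalizedFactors (P * 𝔟) = P ::ₘ normalizedFactors 𝔟 := by
      rw [normalizedFactors_mul hP0 h𝔟, normalizedFactors_irreducible hP.irreducible,
        normalize_eq]
      rfl
    have hcnt : cntM p (normalizedFactors (P * 𝔟)) =
        (if P.IsMaximal ∧ (p : 𝓞 K) ∈ P then 1 else 0) + cntM p (normalizedFactors 𝔟) := by
      rw [hnf]
      unfold cntM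
      rw [Multiset.countP_cons, add_comm]
    rw [map_mul Ideal.absNorm P 𝔟, Nat.factorization_mul hNP hN𝔟, Finsupp.add_apply, ih h𝔟, hcnt, hnP]
    by_cases hpq : p = q
    · subst hpq
      rw [hq.factorization_pow, Finsupp.single_eq_same, if_pos ⟨hmax, hqP⟩]
      ring
    · rw [hq.factorization_pow, Finsupp.single_apply, if_neg (Ne.symm hpq),
        if_neg (fun h => not_mem_of_mem_distinct hq hp (Ne.symm hpq) hmax.ne_top hqP h.2)]
      ring

lemma absNorm_span_natCast (m : ℕ) :
    Ideal.absNorm (Ideal.span {(m : 𝓞 K)}) = m ^ Module.finrank ℚ K := by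
  rw [Ideal.absNorm_span_singleton]
  have hcast : ((m : ℕ) : 𝓞 K) = algebraMap ℤ (𝓞 K) (m : ℤ) := by simp
  rw [hcast, Algebra.norm_algebraMap_of_basis (NumberField.RingOfIntegers.basis K)]
  rw [← NumberField.RingOfIntegers.rank K,
    Module.finrank_eq_card_basis (NumberField.RingOfIntegers.basis K)]
  simp [Int.natAbs_pow]

lemma natCast_prime_not_isUnit {p : ℕ} (hp : p.Prime) : ¬ IsUnit ((p : 𝓞 K)) := by
  intro h
  have h1 : Ideal.span {(p : 𝓞 K)} = ⊤ := Ideal.span_singleton_eq_top.2 h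
  have h2 := absNorm_span_natCast (K := K) p
  rw [h1, Ideal.absNorm_top] at h2
  have hk : 0 < Module.finrank ℚ K := Module.finrank_pos
  have := Nat.one_lt_pow hk.ne' hp.one_lt
  omega

lemma exists_maximal_above {p : ℕ} (hp : p.Prime) :
    ∃ P : Ideal (𝓞 K), P.IsMaximal ∧ (p : 𝓞 K) ∈ P := by
  obtain ⟨P, hPmax, hle⟩ := Ideal.exists_le_maximal (Ideal.span {(p : 𝓞 K)})
    (by rw [Ne, Ideal.span_singleton_eq_top]; exact natCast_prime_not_isUnit hp)
  exact ⟨P, hPmax, hle (Ideal.mem_span_singleton_self _)⟩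

lemma fd_pos (fd : ℕ → ℕ)
    (hfd : ∀ p : ℕ, p.Prime → ∀ P : Ideal (𝓞 K), P.IsMaximal → (p : 𝓞 K) ∈ P →
      Ideal.absNorm P = p ^ fd p)
    {p : ℕ} (hp : p.Prime) : 0 < fd p := by
  obtain ⟨P, hmax, hmem⟩ := exists_maximal_above (K := K) hp
  have h := hfd p hp P hmax hmem
  rcases Nat.eq_zero_or_pos (fd p) with h0 | h'
  · rw [h0, pow_zero, Ideal.absNorm_eq_one_iff] at h
    exact absurd h hmax.ne_top
  · exact h'

lemma finite_SP (fd : ℕ → ℕ)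
    (hfd : ∀ p : ℕ, p.Prime → ∀ P : Ideal (𝓞 K), P.IsMaximal → (p : 𝓞 K) ∈ P →
      Ideal.absNorm P = p ^ fd p)
    {p : ℕ} (hp : p.Prime) :
    Finite {P : Ideal (𝓞 K) // P.IsMaximal ∧ (p : 𝓞 K) ∈ P} := by
  haveI : Finite {I : Ideal (𝓞 K) // Ideal.absNorm I = p ^ fd p} := finite_normEq _
  exact Finite.of_injective
    (fun P => (⟨P.1, hfd p hp P.1 P.2.1 P.2.2⟩ : {I : Ideal (𝓞 K) // Ideal.absNorm I = p ^ fd p}))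
    (by intro P Q h
        simp only [Subtype.mk.injEq] at h
        exact Subtype.ext h)

lemma nf_prod {ι : Type*} (s : Finset ι) (f : ι → Ideal (𝓞 K)) (hf : ∀ i ∈ s, f i ≠ 0) :
    normalizedFactors (∏ i ∈ s, f i) = ∑ i ∈ s, normalizedFactors (f i) := by
  classical
  induction s using Finset.induction_on with
  | empty =>
    simp only [Finset.prod_empty, Finset.sum_empty]
    exact normalizedFactors_one
  | @insert a s ha ih =>
    rw [Finset.prod_insert ha,
      normalizedFactors_mul (hf a (s.mem_insert_self a))
        (Finset.prod_ne_zero_iff.2 fun i hi => hf i (Finset.mem_insert_of_mem hi)),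
      ih (fun i hi => hf i (Finset.mem_insert_of_mem hi)), Finset.sum_insert ha]

lemma nf_prime {P : Ideal (𝓞 K)} (hP : Prime P) : normalizedFactors P = {P} := by
  rw [normalizedFactors_irreducible hP.irreducible, normalize_eq]

lemma eq_of_nf_eq {𝔞 𝔟 : Ideal (𝓞 K)} (ha : 𝔞 ≠ 0) (hb : 𝔟 ≠ 0)
    (h : normalizedFactors 𝔞 = normalizedFactors 𝔟) : 𝔞 = 𝔟 := by
  rw [← associated_iff_eq]
  exact (prod_normalizedFactors ha).symm.trans (h ▸ prod_normalizedFactors hb)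

lemma rdeg_le_finrank (fd : ℕ → ℕ)
    (hfd : ∀ p : ℕ, p.Prime → ∀ P : Ideal (𝓞 K), P.IsMaximal → (p : 𝓞 K) ∈ P →
      Ideal.absNorm P = p ^ fd p)
    {p : ℕ} (hp : p.Prime) : rdeg K p ≤ Module.finrank ℚ K := by
  haveI := finite_SP fd hfd (K := K) hp
  haveI : Fintype {P : Ideal (𝓞 K) // P.IsMaximal ∧ (p : 𝓞 K) ∈ P} := Fintype.ofFinite _
  have hspan0 : (Ideal.span {(p : 𝓞 K)} : Ideal (𝓞 K)) ≠ 0 := by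
    rw [Ideal.zero_eq_bot, Ne, Ideal.span_singleton_eq_bot]
    exact (Nat.cast_ne_zero (R := 𝓞 K)).2 hp.pos.ne'
  have hkey := key fd hfd hp _ hspan0
  rw [absNorm_span_natCast, hp.factorization_pow, Finsupp.single_eq_same] at hkey
  have hge : rdeg K p ≤ cntM p (normalizedFactors (Ideal.span {(p : 𝓞 K)})) := by
    rw [← sum_count_eq_cntM]
    calc rdeg K p = ∑ _P : {P : Ideal (𝓞 K) // P.IsMaximal ∧ (p : 𝓞 K) ∈ P}, 1 := by
          rw [rdeg, Nat.card_eq_fintype_card, Fintype.card, Finset.card_eq_sum_ones]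
      _ ≤ _ := Finset.sum_le_sum fun P _ => by
          rw [Multiset.one_le_count_iff_mem, mem_normalizedFactors_iff hspan0]
          exact ⟨SP_prime hp P.2, Ideal.dvd_iff_le.2 ((Ideal.span_singleton_le_iff_mem _).2 P.2.2)⟩
  calc rdeg K p ≤ fd p * rdeg K p := Nat.le_mul_of_pos_left _ (fd_pos fd hfd hp)
    _ ≤ fd p * cntM p (normalizedFactors (Ideal.span {(p : 𝓞 K)})) := Nat.mul_le_mul_left _ hge
    _ = Module.finrank ℚ K := hkey.symm

end IdealPart

/-! ### The central counting identity -/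

lemma core (K : Type) [Field K] [NumberField K] (fd : ℕ → ℕ)
    (hfd : ∀ p : ℕ, p.Prime → ∀ P : Ideal (𝓞 K), P.IsMaximal → (p : 𝓞 K) ∈ P →
      Ideal.absNorm P = p ^ fd p)
    (n : ℕ) (hn : 0 < n) :
    aK K (nStar fd n) = ∏ p ∈ n.primeFactors,
      Nat.card {e : Fin (rdeg K p) → ℕ // ∑ i, e i = (n.factorization p + fd p - 1) / fd p} := by
  classical
  set β : ℕ → ℕ := fun p => (n.factorization p + fd p - 1) / fd p with hβdef
  have hprime : ∀ p ∈ n.primeFactors, p.Prime := fun p hp => Nat.prime_of_mem_primeFactors hp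
  have hfdpos : ∀ p ∈ n.primeFactors, 0 < fd p := fun p hp => fd_pos fd hfd (hprime p hp)
  have hnstar : nStar fd n = ∏ p ∈ n.primeFactors, p ^ (fd p * β p) := rfl
  have hnstar_pos : 0 < nStar fd n := by
    rw [hnstar]; exact Finset.prod_pos fun p hp => pow_pos (hprime p hp).pos _
  have hfacts : ∀ q ∈ n.primeFactors, (nStar fd n).factorization q = fd q * β q := fun q hq => by
    rw [hnstar]; exact prod_primes_pow_factorization hprime (fun p => fd p * β p) hq
  have hdvd_mem : ∀ q : ℕ, q.Prime → q ∣ nStar fd n → q ∈ n.primeFactors := fun q hq hdvd => by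
    rw [hnstar] at hdvd
    exact prime_dvd_prod_pow hprime (fun p => fd p * β p) hq hdvd
  -- the primes above p, as a type
  haveI hSPfin : ∀ p : n.primeFactors,
      Finite {P : Ideal (𝓞 K) // P.IsMaximal ∧ ((p : ℕ) : 𝓞 K) ∈ P} :=
    fun p => finite_SP fd hfd (hprime p p.2)
  haveI hSPfty : ∀ p : n.primeFactors,
      Fintype {P : Ideal (𝓞 K) // P.IsMaximal ∧ ((p : ℕ) : 𝓞 K) ∈ P} :=
    fun p => Fintype.ofFinite _
  let σ : ∀ p : n.primeFactors,
      {P : Ideal (𝓞 K) // P.IsMaximal ∧ ((p : ℕ) : 𝓞 K) ∈ P} ≃ Fin (rdeg K p) :=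
    fun p => Finite.equivFin _
  -- general facts about elements of normalizedFactors of ideals with norm nStar
  have hmem_nf : ∀ 𝔟 : Ideal (𝓞 K), 𝔟 ≠ 0 → Ideal.absNorm 𝔟 = nStar fd n →
      ∀ Q ∈ normalizedFactors 𝔟, ∃ p : n.primeFactors,
        Q.IsMaximal ∧ ((p : ℕ) : 𝓞 K) ∈ Q := by
    intro 𝔟 h𝔟 hnorm Q hQ
    have hQp : Prime Q := prime_of_normalized_factor Q hQ
    obtain ⟨q, hq, hqQ, hqmax, _⟩ := prime_ideal_data hQp
    have hnormQ : Ideal.absNorm Q = q ^ fd q := hfd q hq Q hqmax hqQ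
    have hdvd : Ideal.absNorm Q ∣ nStar fd n := by
      rw [← hnorm]
      exact map_dvd _ (dvd_of_mem_normalizedFactors hQ)
    have hqd : q ∣ nStar fd n := by
      refine dvd_trans ?_ hdvd
      rw [hnormQ]
      exact dvd_pow_self q (fd_pos fd hfd hq).ne'
    exact ⟨⟨q, hdvd_mem q hq hqd⟩, hqmax, hqQ⟩
  -- the target of the bijection
  let T := ∀ p : n.primeFactors, {e : Fin (rdeg K (p : ℕ)) → ℕ // ∑ i, e i = β p}
  let J : T → Ideal (𝓞 K) := fun g =>
    ∏ p ∈ n.primeFactors.attach, ∏ i : Fin (rdeg K (p : ℕ)), ((σ p).symm i).1 ^ (g p).1 i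
  have hJfac : ∀ g : T, normalizedFactors (J g) =
      ∑ p ∈ n.primeFactors.attach, ∑ i : Fin (rdeg K (p : ℕ)),
        (g p).1 i • ({((σ p).symm i).1} : Multiset (Ideal (𝓞 K))) := by
    intro g
    have hstep := nf_prod (K := K) n.primeFactors.attach
      (fun p => ∏ i : Fin (rdeg K (p : ℕ)), ((σ p).symm i).1 ^ (g p).1 i)
      (fun p _ => Finset.prod_ne_zero_iff.2 (fun i _ =>
        pow_ne_zero _ (SP_prime (hprime p.1 p.2) ((σ p).symm i).2).ne_zero))
    rw [hstep]
    refine Finset.sum_congr rfl fun p _ => ?_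
    have hstep2 := nf_prod (K := K) (Finset.univ : Finset (Fin (rdeg K (p : ℕ))))
      (fun i => ((σ p).symm i).1 ^ (g p).1 i)
      (fun i _ => pow_ne_zero _ (SP_prime (hprime p.1 p.2) ((σ p).symm i).2).ne_zero)
    rw [hstep2]
    refine Finset.sum_congr rfl fun i _ => ?_
    rw [normalizedFactors_pow, nf_prime (SP_prime (hprime p.1 p.2) ((σ p).symm i).2)]
  have hJcount : ∀ (g : T) (p : n.primeFactors)
      (Q : {P : Ideal (𝓞 K) // P.IsMaximal ∧ ((p : ℕ) : 𝓞 K) ∈ P}),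
      Multiset.count Q.1 (normalizedFactors (J g)) = (g p).1 (σ p Q) := by
    intro g p Q
    rw [hJfac g, Multiset.count_sum']
    have hinner : ∀ p' ∈ n.primeFactors.attach,
        Multiset.count Q.1 (∑ i : Fin (rdeg K (p' : ℕ)),
          (g p').1 i • ({((σ p').symm i).1} : Multiset (Ideal (𝓞 K))))
        = if p' = p then (g p).1 (σ p Q) else 0 := by
      intro p' _
      rw [Multiset.count_sum']
      by_cases hpp : p' = p
      · subst hpp
        rw [if_pos rfl]
        have h1 : ∀ i : Fin (rdeg K (p' : ℕ)),
            Multiset.count Q.1 ((g p').1 i • ({((σ p').symm i).1} : Multiset (Ideal (𝓞 K))))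
            = if i = σ p' Q then (g p').1 i else 0 := by
          intro i
          rw [Multiset.count_nsmul, Multiset.count_singleton]
          by_cases hi : i = σ p' Q
          · rw [if_pos hi, if_pos, mul_one]
            rw [hi, Equiv.symm_apply_apply]
          · rw [if_neg hi, if_neg, mul_zero]
            intro hQe
            apply hi
            have : (σ p').symm i = Q := Subtype.ext hQe.symm
            rw [← this, Equiv.apply_symm_apply]
        rw [Finset.sum_congr rfl (fun i _ => h1 i),
          Finset.sum_ite_eq' Finset.univ (σ p' Q) (fun i => (g p').1 i),
          if_pos (Finset.mem_univ _)]
      · rw [if_neg hpp]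
        refine Finset.sum_eq_zero fun i _ => ?_
        rw [Multiset.count_nsmul, Multiset.count_singleton, if_neg, mul_zero]
        intro hQe
        have hne : (p' : ℕ) ≠ (p : ℕ) := fun h => hpp (Subtype.ext h)
        have hmem' : ((p' : ℕ) : 𝓞 K) ∈ Q.1 := by
          rw [hQe]; exact ((σ p').symm i).2.2
        exact not_mem_of_mem_distinct (hprime p p.2) (hprime p' p'.2) (Ne.symm hne)
          Q.2.1.ne_top Q.2.2 hmem'
    rw [Finset.sum_congr rfl hinner,
      Finset.sum_ite_eq' n.primeFactors.attach p (fun _ => (g p).1 (σ p Q)),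
      if_pos (Finset.mem_attach _ p)]
  have hJnorm : ∀ g : T, Ideal.absNorm (J g) = nStar fd n := by
    intro g
    rw [map_prod, hnstar,
      ← Finset.prod_attach n.primeFactors (fun p => p ^ (fd p * β p))]
    refine Finset.prod_congr rfl fun p _ => ?_
    rw [map_prod]
    have h1 : ∀ i : Fin (rdeg K (p : ℕ)),
        Ideal.absNorm (((σ p).symm i).1 ^ (g p).1 i) = ((p : ℕ) ^ fd (p : ℕ)) ^ (g p).1 i :=
      fun i => by
        rw [map_pow, hfd (p : ℕ) (hprime p p.2) _ ((σ p).symm i).2.1 ((σ p).symm i).2.2]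
    rw [Finset.prod_congr rfl (fun i _ => h1 i), Finset.prod_pow_eq_pow_sum, (g p).2, ← pow_mul]
  let Ψ : T → {𝔞 : Ideal (𝓞 K) // Ideal.absNorm 𝔞 = nStar fd n} := fun g => ⟨J g, hJnorm g⟩
  have hΨbij : Function.Bijective Ψ := by
    constructor
    · intro g g' h
      have hJ : J g = J g' := congrArg Subtype.val h
      funext p; apply Subtype.ext; funext i
      have h1 := hJcount g p ((σ p).symm i)
      have h2 := hJcount g' p ((σ p).symm i)
      rw [hJ] at h1
      rw [Equiv.apply_symm_apply] at h1 h2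
      exact h1.symm.trans h2
    · rintro ⟨𝔞, h𝔞⟩
      have h𝔞0 : 𝔞 ≠ 0 := by
        intro h
        rw [h, Ideal.zero_eq_bot, Ideal.absNorm_bot] at h𝔞
        exact hnstar_pos.ne' h𝔞.symm
      have hsum : ∀ p : n.primeFactors,
          ∑ i : Fin (rdeg K (p : ℕ)),
            Multiset.count (((σ p).symm i).1) (normalizedFactors 𝔞) = β p := by
        intro p
        have e1 : ∑ i : Fin (rdeg K (p : ℕ)),
            Multiset.count (((σ p).symm i).1) (normalizedFactors 𝔞)
            = ∑ P : {P : Ideal (𝓞 K) // P.IsMaximal ∧ ((p : ℕ) : 𝓞 K) ∈ P},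
                Multiset.count P.1 (normalizedFactors 𝔞) :=
          Equiv.sum_comp (σ p).symm (fun P => Multiset.count P.1 (normalizedFactors 𝔞))
        rw [e1, sum_count_eq_cntM]
        have h2 := key fd hfd (hprime p p.2) 𝔞 h𝔞0
        rw [h𝔞, hfacts p.1 p.2] at h2
        exact Nat.eq_of_mul_eq_mul_left (hfdpos p p.2) h2.symm
      set g : T := (fun p => ⟨fun i => Multiset.count (((σ p).symm i).1) (normalizedFactors 𝔞),
        hsum p⟩) with hgdef
      refine ⟨g, ?_⟩
      apply Subtype.ext
      show J g = 𝔞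
      have hJ0 : J g ≠ 0 := by
        intro h
        have := hJnorm g
        rw [h, Ideal.zero_eq_bot, Ideal.absNorm_bot] at this
        exact hnstar_pos.ne' this.symm
      apply eq_of_nf_eq hJ0 h𝔞0
      ext Q
      by_cases hQmem : ∃ p : n.primeFactors, Q.IsMaximal ∧ ((p : ℕ) : 𝓞 K) ∈ Q
      · obtain ⟨p, hQ⟩ := hQmem
        have h1 := hJcount g p ⟨Q, hQ⟩
        rw [h1, hgdef]
        show Multiset.count (((σ p).symm (σ p ⟨Q, hQ⟩)).1) (normalizedFactors 𝔞) = _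
        rw [Equiv.symm_apply_apply]
      · rw [Multiset.count_eq_zero_of_notMem, Multiset.count_eq_zero_of_notMem]
        · intro hmem
          obtain ⟨p, hQ⟩ := hmem_nf 𝔞 h𝔞0 h𝔞 Q hmem
          exact hQmem ⟨p, hQ⟩
        · intro hmem
          obtain ⟨p, hQ⟩ := hmem_nf _ hJ0 (hJnorm _) Q hmem
          exact hQmem ⟨p, hQ⟩
  have hcard := Nat.card_eq_of_bijective Ψ hΨbij
  rw [aK, ← hcard]
  rw [Nat.card_pi]
  rw [← Finset.prod_coe_sort n.primeFactors
    (fun p => Nat.card {e : Fin (rdeg K p) → ℕ // ∑ i, e i = β p})]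

/-- a_K(n) ≤ a_K(n*) = ∏_j τ_{r_j}(p_j^{⌈α_j/f_j⌉}) ≤ τ_k(n). -/
theorem aK_le_aK_nStar_eq_prod_le_tauk
    (K : Type) [Field K] [NumberField K] [IsGalois ℚ K] (k : ℕ)
    (hdeg : Module.finrank ℚ K = k)
    (fd : ℕ → ℕ)
    -- fd p is the residue degree of the primes above p:
    (hfd : ∀ p : ℕ, p.Prime → ∀ P : Ideal (𝓞 K), P.IsMaximal → (p : 𝓞 K) ∈ P →
      Ideal.absNorm P = p ^ fd p)
    (n : ℕ) (hn : 0 < n) :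
    aK K n ≤ aK K (nStar fd n) ∧
    aK K (nStar fd n)
      = ∏ p ∈ n.primeFactors, tauk (rdeg K p) (p ^ ((n.factorization p + fd p - 1) / fd p)) ∧
    aK K (nStar fd n) ≤ tauk k n := by
  classical
  have hprime : ∀ p ∈ n.primeFactors, p.Prime := fun p hp => Nat.prime_of_mem_primeFactors hp
  have hcore := core K fd hfd n hn
  have hkpos : 0 < k := hdeg ▸ Module.finrank_pos
  -- the displayed equality
  have heq : aK K (nStar fd n)
      = ∏ p ∈ n.primeFactors, tauk (rdeg K p) (p ^ ((n.factorization p + fd p - 1) / fd p)) := by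
    rw [hcore]
    exact (Finset.prod_congr rfl fun p hp => tauk_prime_pow (hprime p hp) _ _).symm
  refine ⟨?_, heq, ?_⟩
  · -- a_K(n) ≤ a_K(n*)
    by_cases h0 : aK K n = 0
    · rw [h0]; exact Nat.zero_le _
    · -- there is an ideal of norm n, hence fd p ∣ α p for all p and nStar = n
      have hfin : Finite {𝔞 : Ideal (𝓞 K) // Ideal.absNorm 𝔞 = n} := finite_normEq n
      obtain ⟨⟨𝔞, h𝔞⟩⟩ := (Nat.card_ne_zero.1 h0).1
      have h𝔞0 : 𝔞 ≠ 0 := by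
        intro h
        rw [h, Ideal.zero_eq_bot, Ideal.absNorm_bot] at h𝔞
        exact hn.ne' h𝔞.symm
      have hstar : nStar fd n = n := by
        have hmul : ∀ p ∈ n.primeFactors,
            p ^ (fd p * ((n.factorization p + fd p - 1) / fd p)) = p ^ n.factorization p := by
          intro p hp
          have hkey := key fd hfd (hprime p hp) 𝔞 h𝔞0
          rw [h𝔞] at hkey
          have hfdp : 0 < fd p := fd_pos fd hfd (hprime p hp)
          obtain ⟨c, hc⟩ : fd p ∣ n.factorization p := ⟨_, hkey⟩
          congr 1
          rw [hc]
          rw [Nat.add_sub_assoc hfdp, Nat.mul_add_div hfdp,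
            Nat.div_eq_of_lt (Nat.sub_lt hfdp Nat.one_pos), add_zero]
        unfold nStar
        calc ∏ p ∈ n.primeFactors, p ^ (fd p * ((n.factorization p + fd p - 1) / fd p))
            = ∏ p ∈ n.primeFactors, p ^ n.factorization p :=
              Finset.prod_congr rfl hmul
          _ = n := by
              rw [← Nat.support_factorization]
              exact Nat.factorization_prod_pow_eq_self hn.ne'
      rw [hstar]
  · -- a_K(n*) ≤ τ_k(n)
    rw [hcore, tauk_eq_prod k n hn.ne']
    refine Finset.prod_le_prod' fun p hp => ?_
    have hpp := hprime p hp
    have hfdp : 0 < fd p := fd_pos fd hfd hpp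
    have hα : 0 < n.factorization p :=
      Nat.Prime.factorization_pos_of_dvd hpp hn.ne' (Nat.dvd_of_mem_primeFactors hp)
    -- β ≤ α
    have hβα : (n.factorization p + fd p - 1) / fd p ≤ n.factorization p := by
      have h1 : n.factorization p + fd p - 1 ≤ n.factorization p * fd p := by
        have h2 : fd p - 1 ≤ n.factorization p * (fd p - 1) := Nat.le_mul_of_pos_left _ hα
        have h3 : n.factorization p * fd p = n.factorization p + n.factorization p * (fd p - 1) := by
          cases' Nat.exists_eq_add_of_le hfdp with c hc
          rw [hc, Nat.add_sub_cancel_left]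
          ring
        calc n.factorization p + fd p - 1 ≤ n.factorization p + (fd p - 1) :=
              le_of_eq (Nat.add_sub_assoc hfdp _)
          _ ≤ n.factorization p + n.factorization p * (fd p - 1) := Nat.add_le_add_left h2 _
          _ = n.factorization p * fd p := h3.symm
      calc (n.factorization p + fd p - 1) / fd p ≤ n.factorization p * fd p / fd p :=
            Nat.div_le_div_right h1
        _ = n.factorization p := Nat.mul_div_cancel _ hfdp
    -- r ≤ k
    have hrk : rdeg K p ≤ k := hdeg ▸ rdeg_le_finrank fd hfd hpp
    exact card_sumTuple_mono hrk hβα hkpos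

end
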